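/- Let f and g be measurable functions of (X₁,...,X_n, X₁′,...,X_n′) where the X_i′ are independent copies of the X_i, all mutually independent. Suppose for some index j: E[g | all variables except X_j] = 0 (i.e., E_{X_j} g = 0), and f does not depend on X_j′. Then E[f·g] = E[(∇_j f)·g], where ∇_j f = f − f^j and f^j is obtained from f by replacing X_j with X_j′. -/
import Mathlib


open MeasureTheory Real

/-- Properties of the replace-one difference operator: if `E_{X_j} g = 0` and `f` does not
depend on the copy `X_j'`, then `E[f g] = E[(∇_j f) g]`. The underlying probability space
is the product of the laws of `(X₁,...,Xₙ)` and of the independent copies `(X₁',...,Xₙ')`. -/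
theorem stmt9 {E : Type*} [MeasurableSpace E] (n : ℕ) (ν : Fin n → Measure E)
    [∀ i, IsProbabilityMeasure (ν i)] (j : Fin n)
    (f g : (Fin n → E) × (Fin n → E) → ℝ)
    (hf : Measurable f) (hg : Measurable g)
    (hfj : ∀ (x x' : Fin n → E) (v : E), f (x, x') = f (x, Function.update x' j v))
    (hgj : ∀ (x x' : Fin n → E), ∫ v, g (Function.update x j v, x') ∂(ν j) = 0)
    (hint1 : Integrable (fun p => f p * g p) ((Measure.pi ν).prod (Measure.pi ν)))
    (hint2 : Integrable (fun p => f (Function.update p.1 j (p.2 j), p.2) * g p)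
      ((Measure.pi ν).prod (Measure.pi ν))) :
    ∫ p, f p * g p ∂((Measure.pi ν).prod (Measure.pi ν)) =
      ∫ p, (f p - f (Function.update p.1 j (p.2 j), p.2)) * g p
        ∂((Measure.pi ν).prod (Measure.pi ν)) := by
  have key : ∫ p, f (Function.update p.1 j (p.2 j), p.2) * g p
      ∂((Measure.pi ν).prod (Measure.pi ν)) = 0 := by
    rcases n with _ | m
    · exact j.elim0
    set F : (Fin (m + 1) → E) × (Fin (m + 1) → E) → ℝ :=
      fun p => f (Function.update p.1 j (p.2 j), p.2) * g p with hF
    let Φ : ((Fin (m + 1) → E) × (Fin (m + 1) → E)) ≃ᵐ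
        E × ((Fin m → E) × (Fin (m + 1) → E)) :=
      ((MeasurableEquiv.piFinSuccAbove (fun _ => E) j).prodCongr
        (MeasurableEquiv.refl _)).trans MeasurableEquiv.prodAssoc
    have hΦ : MeasurePreserving Φ ((Measure.pi ν).prod (Measure.pi ν))
        ((ν j).prod ((Measure.pi fun i => ν (j.succAbove i)).prod (Measure.pi ν))) :=
      (measurePreserving_prodAssoc _ _ _).comp
        ((measurePreserving_piFinSuccAbove ν j).prod (MeasurePreserving.id _))
    have hΦsymm : ∀ v (y : Fin m → E) (x' : Fin (m + 1) → E),
        Φ.symm (v, (y, x')) = (j.insertNth v y, x') := by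
      intro v y x'
      apply Φ.injective
      rw [MeasurableEquiv.apply_symm_apply]
      simp [Φ, MeasurableEquiv.prodAssoc, MeasurableEquiv.prodCongr,
        MeasurableEquiv.trans_apply, Fin.removeNth]
    have hI : Integrable (F ∘ Φ.symm)
        ((ν j).prod ((Measure.pi fun i => ν (j.succAbove i)).prod (Measure.pi ν))) := by
      have := (hΦ.symm Φ).integrable_comp_emb Φ.symm.measurableEmbedding (g := F)
      exact this.mpr hint2
    calc ∫ p, F p ∂((Measure.pi ν).prod (Measure.pi ν))
        = ∫ p, (F ∘ Φ.symm) (Φ p) ∂((Measure.pi ν).prod (Measure.pi ν)) := by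
          simp
      _ = ∫ q, (F ∘ Φ.symm) q
            ∂((ν j).prod ((Measure.pi fun i => ν (j.succAbove i)).prod (Measure.pi ν))) :=
          hΦ.integral_comp' _
      _ = ∫ q, ∫ v, (F ∘ Φ.symm) (v, q)
            ∂(ν j) ∂((Measure.pi fun i => ν (j.succAbove i)).prod (Measure.pi ν)) :=
          integral_prod_symm _ hI
      _ = 0 := by
          have hz : (fun q : (Fin m → E) × (Fin (m + 1) → E) =>
              ∫ v, (F ∘ Φ.symm) (v, q) ∂(ν j)) = fun _ => 0 := by
            funext q
            obtain ⟨y, x'⟩ := q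
            have h1 : ∀ v, (F ∘ Φ.symm) (v, (y, x')) =
                f (j.insertNth (x' j) y, x') *
                  g (Function.update (j.insertNth (x' j) y) j v, x') := by
              intro v
              simp only [Function.comp_apply, hΦsymm, hF]
              rw [Fin.update_insertNth, Fin.update_insertNth]
            simp_rw [h1]
            rw [MeasureTheory.integral_const_mul, hgj, mul_zero]
          rw [hz, integral_zero]
  have hsub : ∀ p : (Fin n → E) × (Fin n → E),
      (f p - f (Function.update p.1 j (p.2 j), p.2)) * g p =
        f p * g p - f (Function.update p.1 j (p.2 j), p.2) * g p := by
    intro p; ring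
  simp_rw [hsub]
  rw [integral_sub hint1 hint2, key, sub_zero]
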